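/- Let λ ∼ (1/r)·Poisson(r·L) for integer r ≥ 1 (the average of r i.i.d. Poisson(L) variables, where L = log(1/p) for p ∈ (0,1)), and let ζ > 0. If r ≥ 2(L + log(1+ζ))·log(1/δ')/log²(1+ζ), then Pr( |λ − L| ≥ log(1+ζ) ) ≤ 2δ'. Consequently, with probability at least 1 − 2δ', the estimate e^{−λ} satisfies p/(1+ζ) ≤ e^{−λ} ≤ (1+ζ)·p. -/

import Mathlib

lemma tsum_pow_div_fact (y : ℝ) : ∑' n : ℕ, y ^ n / n.factorial = Real.exp y := by
  rw [Real.exp_eq_exp_ℝ, NormedSpace.exp_eq_tsum_div]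

-- e^{-θ} ≤ 1 - θ + θ²/2 for θ ≥ 0
lemma exp_neg_le_quad {θ : ℝ} (hθ : 0 ≤ θ) : Real.exp (-θ) ≤ 1 - θ + θ ^ 2 / 2 := by
  have hmono : MonotoneOn (fun x : ℝ => 1 - x + x ^ 2 / 2 - Real.exp (-x)) (Set.Ici 0) := by
    apply monotoneOn_of_deriv_nonneg (convex_Ici 0)
    · fun_prop
    · intro x hx
      apply DifferentiableAt.differentiableWithinAt
      fun_prop
    · intro x hx
      have : deriv (fun x : ℝ => 1 - x + x ^ 2 / 2 - Real.exp (-x)) x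
          = -1 + x + Real.exp (-x) := by
        have h1 : HasDerivAt (fun x : ℝ => 1 - x + x ^ 2 / 2 - Real.exp (-x))
            (0 - 1 + 2 * x ^ 1 / 2 - Real.exp (-x) * (-1)) x := by
          apply HasDerivAt.sub
          · exact (((hasDerivAt_const x (1:ℝ)).sub (hasDerivAt_id x)).add
              (((hasDerivAt_pow 2 x)).div_const 2))
          · exact (Real.hasDerivAt_exp (-x)).comp x ((hasDerivAt_id x).neg)
        have := h1.deriv
        rw [this]; ring
      rw [this]
      have := Real.add_one_le_exp (-x)
      simp only [interior_Ici, Set.mem_Ioi] at hx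
      linarith
  have h0 : (0:ℝ) ∈ Set.Ici (0:ℝ) := by simp
  have := hmono h0 hθ hθ
  simp at this
  linarith

-- (1-θ)e^θ ≤ 1 - θ²/2 for θ ≥ 0
lemma one_sub_mul_exp_le {θ : ℝ} (hθ : 0 ≤ θ) :
    (1 - θ) * Real.exp θ ≤ 1 - θ ^ 2 / 2 := by
  have hmono : MonotoneOn (fun x : ℝ => 1 - x ^ 2 / 2 - (1 - x) * Real.exp x) (Set.Ici 0) := by
    apply monotoneOn_of_deriv_nonneg (convex_Ici 0)
    · fun_prop
    · intro x hx
      apply DifferentiableAt.differentiableWithinAt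
      fun_prop
    · intro x hx
      have : deriv (fun x : ℝ => 1 - x ^ 2 / 2 - (1 - x) * Real.exp x) x
          = -x + x * Real.exp x := by
        have h1 : HasDerivAt (fun x : ℝ => 1 - x ^ 2 / 2 - (1 - x) * Real.exp x)
            ((0 - 2 * x ^ 1 / 2) - ((0 - 1) * Real.exp x + (1 - x) * Real.exp x)) x := by
          apply HasDerivAt.sub
          · exact (hasDerivAt_const x (1:ℝ)).sub ((hasDerivAt_pow 2 x).div_const 2)
          · exact ((hasDerivAt_const x (1:ℝ)).sub (hasDerivAt_id x)).mul
              (Real.hasDerivAt_exp x)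
        have := h1.deriv
        rw [this]; ring
      rw [this]
      simp only [interior_Ici, Set.mem_Ioi] at hx
      have h2 : (1:ℝ) ≤ Real.exp x := Real.one_le_exp hx.le
      nlinarith
  have h0 : (0:ℝ) ∈ Set.Ici (0:ℝ) := by simp
  have := hmono h0 hθ hθ
  simp at this
  linarith

lemma summable_expmul (m x : ℝ) :
    Summable (fun k : ℕ => Real.exp (x * k) * (Real.exp (-m) * m ^ k / k.factorial)) := by
  have : (fun k : ℕ => Real.exp (x * k) * (Real.exp (-m) * m ^ k / k.factorial))
      = fun k : ℕ => Real.exp (-m) * ((m * Real.exp x) ^ k / k.factorial) := by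
    funext k
    rw [mul_comm x (k:ℝ), Real.exp_nat_mul, mul_pow]
    ring
  rw [this]
  exact (Real.summable_pow_div_factorial _).mul_left _

lemma tsum_expmul (m x : ℝ) :
    ∑' k : ℕ, Real.exp (x * k) * (Real.exp (-m) * m ^ k / k.factorial)
      = Real.exp (m * (Real.exp x - 1)) := by
  have h : (fun k : ℕ => Real.exp (x * k) * (Real.exp (-m) * m ^ k / k.factorial))
      = fun k : ℕ => Real.exp (-m) * ((m * Real.exp x) ^ k / k.factorial) := by
    funext k
    rw [mul_comm x (k:ℝ), Real.exp_nat_mul, mul_pow]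
    ring
  rw [h, tsum_mul_left, tsum_pow_div_fact, ← Real.exp_add]
  ring_nf

lemma summable_poisson (m : ℝ) :
    Summable (fun k : ℕ => Real.exp (-m) * m ^ k / k.factorial) := by
  have := summable_expmul m 0
  simpa using this

lemma tsum_poisson (m : ℝ) :
    ∑' k : ℕ, Real.exp (-m) * m ^ k / k.factorial = 1 := by
  have := tsum_expmul m 0
  simpa using this

lemma poisson_nonneg {m : ℝ} (hm : 0 ≤ m) (k : ℕ) :
    0 ≤ Real.exp (-m) * m ^ k / k.factorial := by
  positivity

lemma chernoff_upper (m t θ : ℝ) (hm : 0 ≤ m) (hθ : 0 ≤ θ) :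
    ∑' k : ℕ, (if m + t ≤ (k : ℝ) then Real.exp (-m) * m ^ k / k.factorial else 0)
      ≤ Real.exp (m * (Real.exp θ - 1) - θ * (m + t)) := by
  set w : ℕ → ℝ := fun k => Real.exp (-m) * m ^ k / k.factorial with hw
  set g : ℕ → ℝ := fun k => Real.exp (-(θ * (m + t))) * (Real.exp (θ * k) * w k) with hg
  have hgsum : Summable g := (summable_expmul m θ).mul_left _
  have hle : ∀ k : ℕ, (if m + t ≤ (k : ℝ) then w k else 0) ≤ g k := by
    intro k
    by_cases h : m + t ≤ (k : ℝ)
    · simp only [h, if_true, hg]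
      have h1 : (1 : ℝ) ≤ Real.exp (-(θ * (m + t))) * Real.exp (θ * k) := by
        rw [← Real.exp_add]
        apply Real.one_le_exp
        nlinarith
      have hwk : 0 ≤ w k := poisson_nonneg hm k
      nlinarith
    · simp only [h, if_false, hg]
      positivity
  have hsum1 : Summable (fun k : ℕ => if m + t ≤ (k : ℝ) then w k else 0) := by
    apply Summable.of_nonneg_of_le _ hle hgsum
    intro k
    by_cases h : m + t ≤ (k : ℝ) <;> simp [h] <;> exact poisson_nonneg hm k
  calc ∑' k : ℕ, (if m + t ≤ (k : ℝ) then w k else 0) ≤ ∑' k, g k :=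
        Summable.tsum_le_tsum hle hsum1 hgsum
    _ = Real.exp (-(θ * (m + t))) * Real.exp (m * (Real.exp θ - 1)) := by
        rw [hg, tsum_mul_left, tsum_expmul]
    _ = Real.exp (m * (Real.exp θ - 1) - θ * (m + t)) := by
        rw [← Real.exp_add]; ring_nf

lemma chernoff_lower (m t θ : ℝ) (hm : 0 ≤ m) (hθ : 0 ≤ θ) :
    ∑' k : ℕ, (if (k : ℝ) ≤ m - t then Real.exp (-m) * m ^ k / k.factorial else 0)
      ≤ Real.exp (m * (Real.exp (-θ) - 1) + θ * (m - t)) := by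
  set w : ℕ → ℝ := fun k => Real.exp (-m) * m ^ k / k.factorial with hw
  set g : ℕ → ℝ := fun k => Real.exp (θ * (m - t)) * (Real.exp (-θ * k) * w k) with hg
  have hgsum : Summable g := (summable_expmul m (-θ)).mul_left _
  have hle : ∀ k : ℕ, (if (k : ℝ) ≤ m - t then w k else 0) ≤ g k := by
    intro k
    by_cases h : (k : ℝ) ≤ m - t
    · simp only [h, if_true, hg]
      have h1 : (1 : ℝ) ≤ Real.exp (θ * (m - t)) * Real.exp (-θ * k) := by
        rw [← Real.exp_add]
        apply Real.one_le_exp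
        nlinarith
      have hwk : 0 ≤ w k := poisson_nonneg hm k
      nlinarith
    · simp only [h, if_false, hg]
      positivity
  have hsum1 : Summable (fun k : ℕ => if (k : ℝ) ≤ m - t then w k else 0) := by
    apply Summable.of_nonneg_of_le _ hle hgsum
    intro k
    by_cases h : (k : ℝ) ≤ m - t <;> simp [h] <;> exact poisson_nonneg hm k
  calc ∑' k : ℕ, (if (k : ℝ) ≤ m - t then w k else 0) ≤ ∑' k, g k :=
        Summable.tsum_le_tsum hle hsum1 hgsum
    _ = Real.exp (θ * (m - t)) * Real.exp (m * (Real.exp (-θ) - 1)) := by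
        rw [hg, tsum_mul_left, tsum_expmul]
    _ = Real.exp (m * (Real.exp (-θ) - 1) + θ * (m - t)) := by
        rw [← Real.exp_add]; ring_nf

lemma tail_upper (m t : ℝ) (hm : 0 < m) (ht : 0 < t) :
    ∑' k : ℕ, (if m + t ≤ (k : ℝ) then Real.exp (-m) * m ^ k / k.factorial else 0)
      ≤ Real.exp (-(t ^ 2 / (2 * (m + t)))) := by
  have hs : 0 < m + t := by linarith
  have hsne : (m + t) ≠ 0 := hs.ne'
  refine (chernoff_upper m t (t / (m + t)) hm.le (by positivity)).trans ?_
  apply Real.exp_le_exp.mpr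
  set E := Real.exp (t / (m + t)) with hE
  have h1 : (1 - t / (m + t)) * E ≤ 1 - (t / (m + t)) ^ 2 / 2 :=
    one_sub_mul_exp_le (by positivity)
  have h4 := mul_le_mul_of_nonneg_left h1 hs.le
  have e1 : (m + t) * ((1 - t / (m + t)) * E) = m * E := by
    field_simp; try ring
  have e2 : (m + t) * (1 - (t / (m + t)) ^ 2 / 2) = (m + t) - t ^ 2 / (2 * (m + t)) := by
    field_simp; try ring
  rw [e1, e2] at h4
  have e3 : t / (m + t) * (m + t) = t := by field_simp
  rw [e3]
  linarith

lemma tail_lower (m t : ℝ) (hm : 0 < m) (ht : 0 < t) :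
    ∑' k : ℕ, (if (k : ℝ) ≤ m - t then Real.exp (-m) * m ^ k / k.factorial else 0)
      ≤ Real.exp (-(t ^ 2 / (2 * (m + t)))) := by
  have hmne : m ≠ 0 := hm.ne'
  refine (chernoff_lower m t (t / m) hm.le (by positivity)).trans ?_
  apply Real.exp_le_exp.mpr
  have hq : Real.exp (-(t / m)) ≤ 1 - t / m + (t / m) ^ 2 / 2 :=
    exp_neg_le_quad (by positivity)
  have h2 := mul_le_mul_of_nonneg_left hq hm.le
  have e1 : m * (1 - t / m + (t / m) ^ 2 / 2) = m - t + t ^ 2 / (2 * m) := by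
    field_simp; try ring
  rw [e1] at h2
  have e3 : t / m * (m - t) = t - t ^ 2 / m := by field_simp; try ring
  rw [e3]
  have h7 : t ^ 2 / (2 * (m + t)) ≤ t ^ 2 / (2 * m) := by
    apply div_le_div_of_nonneg_left (by positivity) (by linarith) (by linarith)
  have h8 : t ^ 2 / (2 * m) * 2 = t ^ 2 / m * 2 / 2 := by ring
  nlinarith [h2, h7]

lemma summable_if_le {m : ℝ} (hm : 0 ≤ m) (P : ℕ → Prop) [DecidablePred P] :
    Summable (fun k : ℕ => if P k then Real.exp (-m) * m ^ k / k.factorial else 0) := by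
  apply Summable.of_nonneg_of_le _ _ (summable_poisson m)
  · intro k; by_cases h : P k <;> simp [h, poisson_nonneg hm k]
  · intro k; by_cases h : P k <;> simp [h, poisson_nonneg hm k]



/-- Accuracy of the TPA estimate: if `λ` is the average of `r` i.i.d. `Poisson(L)`
variables (so `r·λ ∼ Poisson(rL)`) with `L = log(1/p)` and
`r ≥ 2(L + log(1+ζ))·log(1/δ')/log²(1+ζ)`, then `Pr(|λ − L| ≥ log(1+ζ)) ≤ 2δ'`,
and with probability `≥ 1 − 2δ'` the estimate `e^{−λ}` is a `(1+ζ)`-factor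
approximation of `p`. -/
theorem tpa_estimate_accuracy (r : ℕ) (hr : 1 ≤ r) (p ζ δ' L : ℝ)
    (hp0 : 0 < p) (hp1 : p < 1) (hζ : 0 < ζ) (hδ0 : 0 < δ') (hδ1 : δ' < 1)
    (hL : L = Real.log (1 / p))
    (hrge : 2 * (L + Real.log (1 + ζ)) * Real.log (1 / δ') / (Real.log (1 + ζ)) ^ 2
      ≤ (r : ℝ)) :
    (∑' k : ℕ, if Real.log (1 + ζ) ≤ |(k : ℝ) / r - L| then
        Real.exp (-((r : ℝ) * L)) * ((r : ℝ) * L) ^ k / k.factorial else 0) ≤ 2 * δ' ∧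
    1 - 2 * δ' ≤ (∑' k : ℕ, if p / (1 + ζ) ≤ Real.exp (-((k : ℝ) / r)) ∧
        Real.exp (-((k : ℝ) / r)) ≤ (1 + ζ) * p then
        Real.exp (-((r : ℝ) * L)) * ((r : ℝ) * L) ^ k / k.factorial else 0) := by
  have hr1 : (1 : ℝ) ≤ (r : ℝ) := by exact_mod_cast hr
  have hr0 : (0 : ℝ) < (r : ℝ) := by linarith
  set a := Real.log (1 + ζ) with hadef
  have ha : 0 < a := Real.log_pos (by linarith)
  have hL0 : 0 < L := by
    rw [hL]
    apply Real.log_pos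
    rw [lt_div_iff₀ hp0]; linarith
  set m := (r : ℝ) * L with hmdef
  set t := (r : ℝ) * a with htdef
  have hm : 0 < m := by positivity
  have ht : 0 < t := by positivity
  have hδlog : 0 < Real.log (1 / δ') := by
    apply Real.log_pos
    rw [lt_div_iff₀ hδ0]; linarith
  -- the exponential bound from the choice of r
  have hexp : Real.exp (-(t ^ 2 / (2 * (m + t)))) ≤ δ' := by
    have h2 : 2 * (L + a) * Real.log (1 / δ') ≤ (r : ℝ) * a ^ 2 := by
      rw [div_le_iff₀ (by positivity)] at hrge
      linarith
    have h3 : t ^ 2 / (2 * (m + t)) = (r : ℝ) * a ^ 2 / (2 * (L + a)) := by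
      rw [htdef, hmdef, div_eq_div_iff (by positivity) (by positivity)]
      ring
    have h1 : Real.log (1 / δ') ≤ t ^ 2 / (2 * (m + t)) := by
      rw [h3, le_div_iff₀ (by positivity)]
      linarith
    calc Real.exp (-(t ^ 2 / (2 * (m + t)))) ≤ Real.exp (-Real.log (1 / δ')) :=
          Real.exp_le_exp.mpr (by linarith)
      _ = δ' := by rw [one_div, Real.log_inv, neg_neg, Real.exp_log hδ0]
  -- pointwise splitting of the deviation event
  have hpt : ∀ k : ℕ, (if a ≤ |(k : ℝ) / r - L| then
        Real.exp (-m) * m ^ k / k.factorial else 0)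
      = (if m + t ≤ (k : ℝ) then Real.exp (-m) * m ^ k / k.factorial else 0)
        + (if (k : ℝ) ≤ m - t then Real.exp (-m) * m ^ k / k.factorial else 0) := by
    intro k
    have h1 : (m + t ≤ (k : ℝ)) ↔ a ≤ (k : ℝ) / r - L := by
      rw [le_sub_iff_add_le, le_div_iff₀ hr0]
      constructor <;> intro h <;> [nlinarith; nlinarith]
    have h2 : ((k : ℝ) ≤ m - t) ↔ a ≤ -((k : ℝ) / r - L) := by
      constructor
      · intro h
        have hx : (k : ℝ) / r ≤ L - a := by rw [div_le_iff₀ hr0]; nlinarith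
        linarith
      · intro h
        have hx : (k : ℝ) / r ≤ L - a := by linarith
        rw [div_le_iff₀ hr0] at hx; nlinarith
    by_cases hA : m + t ≤ (k : ℝ)
    · have hB : ¬ ((k : ℝ) ≤ m - t) := by intro h; linarith
      have hC : a ≤ |(k : ℝ) / r - L| := le_abs.mpr (Or.inl (h1.mp hA))
      simp [hA, hB, hC]
    · by_cases hB : (k : ℝ) ≤ m - t
      · have hC : a ≤ |(k : ℝ) / r - L| := le_abs.mpr (Or.inr (h2.mp hB))
        simp [hA, hB, hC]
      · have hC : ¬ a ≤ |(k : ℝ) / r - L| := by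
          intro h
          rcases le_abs.mp h with h' | h'
          · exact hA (h1.mpr h')
          · exact hB (h2.mpr h')
        simp [hA, hB, hC]
  have hsumU : Summable (fun k : ℕ =>
      if m + t ≤ (k : ℝ) then Real.exp (-m) * m ^ k / k.factorial else 0) :=
    summable_if_le hm.le _
  have hsumL : Summable (fun k : ℕ =>
      if (k : ℝ) ≤ m - t then Real.exp (-m) * m ^ k / k.factorial else 0) :=
    summable_if_le hm.le _
  have key1 : (∑' k : ℕ, if a ≤ |(k : ℝ) / r - L| then
      Real.exp (-m) * m ^ k / k.factorial else 0) ≤ 2 * δ' := by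
    rw [tsum_congr hpt, Summable.tsum_add hsumU hsumL]
    have u := (tail_upper m t hm ht).trans hexp
    have l := (tail_lower m t hm ht).trans hexp
    linarith
  refine ⟨key1, ?_⟩
  -- second part
  have hsum1 : Summable (fun k : ℕ =>
      if a ≤ |(k : ℝ) / r - L| then Real.exp (-m) * m ^ k / k.factorial else 0) :=
    summable_if_le hm.le _
  have hsum2 : Summable (fun k : ℕ =>
      if p / (1 + ζ) ≤ Real.exp (-((k : ℝ) / r)) ∧ Real.exp (-((k : ℝ) / r)) ≤ (1 + ζ) * p
      then Real.exp (-m) * m ^ k / k.factorial else 0) :=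
    summable_if_le hm.le _
  have hpt2 : ∀ k : ℕ, Real.exp (-m) * m ^ k / k.factorial
      - (if a ≤ |(k : ℝ) / r - L| then Real.exp (-m) * m ^ k / k.factorial else 0)
      ≤ (if p / (1 + ζ) ≤ Real.exp (-((k : ℝ) / r)) ∧
          Real.exp (-((k : ℝ) / r)) ≤ (1 + ζ) * p
        then Real.exp (-m) * m ^ k / k.factorial else 0) := by
    intro k
    have hwk := poisson_nonneg hm.le k
    by_cases h1 : a ≤ |(k : ℝ) / r - L|
    · rw [if_pos h1]
      split_ifs with h2 <;> simp <;> linarith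
    · have habs := abs_lt.mp (not_le.mp h1)
      have hp' : Real.exp (-L) = p := by
        rw [hL, one_div, Real.log_inv, neg_neg, Real.exp_log hp0]
      have hea : Real.exp a = 1 + ζ := Real.exp_log (by linarith)
      have hcond : p / (1 + ζ) ≤ Real.exp (-((k : ℝ) / r)) ∧
          Real.exp (-((k : ℝ) / r)) ≤ (1 + ζ) * p := by
        constructor
        · calc p / (1 + ζ) = Real.exp (-L) / Real.exp a := by rw [hp', hea]
            _ = Real.exp (-L - a) := by rw [Real.exp_sub]
            _ ≤ Real.exp (-((k : ℝ) / r)) := Real.exp_le_exp.mpr (by linarith [habs.2])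
        · calc Real.exp (-((k : ℝ) / r)) ≤ Real.exp (-L + a) :=
              Real.exp_le_exp.mpr (by linarith [habs.1])
            _ = (1 + ζ) * p := by rw [Real.exp_add, hp', hea]; ring
      rw [if_neg h1, if_pos hcond]
      linarith
  have hfinal := Summable.tsum_le_tsum hpt2 ((summable_poisson m).sub hsum1) hsum2
  rw [Summable.tsum_sub (summable_poisson m) hsum1, tsum_poisson] at hfinal
  linarith
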